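/- For every integer n ≥ 5, every seed ψ that has a parent, and every i with 1 ≤ i ≤ n−3: ψ = son(parent(ψ), i) if and only if ord(ψ) = i, where ord(ψ) is the position of the entry mis(ψ)⊕1 in ψ counted from the right end. -/

import Mathlib

/-- `σ`: cyclic left shift by one position. -/
def sig (l : List ℕ) : List ℕ := l.rotate 1

/-- `τ`: transposition of the first two entries. -/
def tau : List ℕ → List ℕ
  | a :: b :: rest => b :: a :: rest
  | l => l

/-- Apply a word over the alphabet {σ,τ} (encoded: `false` = σ, `true` = τ)
letter by letter, from left to right. -/
def applyWord (w : List Bool) (l : List ℕ) : List ℕ :=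
  w.foldl (fun p c => if c then tau p else sig p) l

/-- `l` is an n-permutation: a sequence containing each of 1,…,n exactly once. -/
def IsPerm (n : ℕ) (l : List ℕ) : Prop := l.Perm (List.range' 1 n)

/-- The permutation (n, n−1, …, 1). -/
def descList (n : ℕ) : List ℕ := (List.range n).reverse.map (· + 1)

/-- Cyclic successor ⊕1 on {1,…,n−1}. -/
def osucc (n a : ℕ) : ℕ := if a = n - 1 then 1 else a + 1

/-- Cyclic predecessor ⊖1 on {1,…,n−1}. -/
def opred (n a : ℕ) : ℕ := if a = 1 then n - 1 else a - 1

/-- From a seed (a₁, a₂, …, a_{n−1}) form (a₁, a₂⊕1, a₂, …, a_{n−1}). -/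
def seedToPerm (n : ℕ) : List ℕ → List ℕ
  | a1 :: a2 :: rest => a1 :: osucc n a2 :: a2 :: rest
  | l => l

/-- ψ is a seed: an (n−1)-tuple of distinct elements of {1,…,n} with first entry n
such that (a₁, a₂⊕1, a₂, …, a_{n−1}) is an n-permutation. -/
def IsSeed (n : ℕ) (ψ : List ℕ) : Prop :=
  ψ.length = n - 1 ∧ ψ.head? = some n ∧ IsPerm n (seedToPerm n ψ)

/-- The missing element mis(ψ) = a₂⊕1. -/
def mis (n : ℕ) (ψ : List ℕ) : ℕ := osucc n (ψ.getD 1 0)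

/-- The package perms(ψ): all permutations obtained by inserting mis(ψ)
at any position of ψ and then taking any cyclic shift. -/
def perms (n : ℕ) (ψ : List ℕ) : Set (List ℕ) :=
  { π | ∃ i j, i ≤ ψ.length ∧ π = (ψ.insertIdx i (mis n ψ)).rotate j }

/-- cycle(π): the set of cyclic shifts of π. -/
def cycle (π : List ℕ) : Set (List ℕ) := { ρ | ∃ j, ρ = π.rotate j }

/-- ψ̃ = (a₁, mis(ψ), a₂, …, a_{n−1}). -/
def tildeSeed (n : ℕ) (ψ : List ℕ) : List ℕ :=
  match ψ with
  | a1 :: rest => a1 :: mis n ψ :: rest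
  | [] => []

/-- ψ^(i) (for 1 ≤ i ≤ n−1): the right cyclic shift of ψ by i−1 positions
with mis(ψ) prepended; for i = n−1 this is (x, a₂, …, a_{n−1}, a₁). -/
def seedShift (n : ℕ) (ψ : List ℕ) (i : ℕ) : List ℕ := mis n ψ :: ψ.rotate (n - i)

/-- Length of the maximal initial run a = b⊕1 in a list. -/
def decRun (n : ℕ) : List ℕ → ℕ
  | a :: b :: rest => if a = osucc n b then decRun n (b :: rest) + 1 else 1
  | [_] => 1
  | [] => 0

/-- height(ψ): the largest k with aᵢ = a_{i+1}⊕1 for all 2 ≤ i ≤ k. -/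
def height (n : ℕ) (ψ : List ℕ) : ℕ := decRun n ψ.tail

/-- The hub seed (n, b, b⊖1, …, b⊖(n−3)). -/
def hubSeed (n b : ℕ) : List ℕ := n :: (List.range (n - 2)).map (fun j => (opred n)^[j] b)

/-- Hubₙ: the set of hub seeds. -/
def Hub (n : ℕ) : Set (List ℕ) := { ψ | ∃ b, 1 ≤ b ∧ b ≤ n - 1 ∧ ψ = hubSeed n b }

/-- `IsParent n ψ β` means ψ = parent(β): ψ, β are neighboring distinct seeds,
height(ψ) > 1 and mis(ψ) = mis(β)⊕1. -/
def IsParent (n : ℕ) (par child : List ℕ) : Prop :=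
  IsSeed n par ∧ IsSeed n child ∧ par ≠ child ∧
  (perms n par ∩ perms n child).Nonempty ∧
  1 < height n par ∧ mis n par = osucc n (mis n child)

/-- `IsSon n β ψ i` means β = son(ψ, i), i.e. β is a seed with σ^i(ψ^(i)) = β̃. -/
def IsSon (n : ℕ) (child par : List ℕ) (i : ℕ) : Prop :=
  IsSeed n child ∧ sig^[i] (seedShift n par i) = tildeSeed n child

/-- γ_k = σ^k τ. -/
def gam (k : ℕ) : List Bool := List.replicate k false ++ [true]

/-- W_0 = σ and W_k = τ · ∏_{i=1}^{n−2} σ^i W_{Δ(k,i)} γ_{n−2−i},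
where Δ(k,i) = min(k−1, n−2−i). -/
def W (n : ℕ) : ℕ → List Bool
  | 0 => [false]
  | k + 1 => true :: ((List.range (n - 2)).map (fun j =>
      List.replicate (j + 1) false ++ W n (min k (n - 2 - (j + 1))) ++
        gam (n - 2 - (j + 1)))).flatten
  termination_by k => k
  decreasing_by omega

/-- V_n = γ_{n−3} · ∏_{i=2}^{n−3} σ^i W_{Δ(n−3,i)} γ_{n−2−i} · σ^{n−1}. -/
def V (n : ℕ) : List Bool :=
  gam (n - 3) ++
  ((List.range (n - 4)).map (fun j =>
    List.replicate (j + 2) false ++ W n (min (n - 4) (n - 2 - (j + 2))) ++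
      gam (n - 2 - (j + 2)))).flatten ++
  List.replicate (n - 1) false

/-- SEQ_n = γ₁^{n−2} σ² (V_n τ)^{n−2} V_n. -/
def SEQ (n : ℕ) : List Bool :=
  (List.replicate (n - 2) (gam 1)).flatten ++ List.replicate 2 false ++
  (List.replicate (n - 2) (V n ++ [true])).flatten ++ V n

/-- r: the first element after the value n in the left-to-right cyclic reading
of π with the entry p₂ skipped. -/
def rVal (n : ℕ) (π : List ℕ) : ℕ :=
  match π with
  | p1 :: _ :: rest =>
      let l := p1 :: rest
      l.getD ((l.idxOf n + 1) % l.length) 0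
  | _ => 0

/-- The Sawada–Williams successor function `next`. -/
def swNext (n : ℕ) (π : List ℕ) : List ℕ :=
  if π = descList n then sig π
  else if π.getD 1 0 ≠ n ∧ π.getD 1 0 = osucc n (rVal n π) then tau π else sig π

/-- GEN(π, α): all permutations visited (including π) when α is applied to π. -/
def GEN (α : List Bool) (π : List ℕ) : Set (List ℕ) :=
  { ρ | ∃ t, t ≤ α.length ∧ ρ = applyWord (α.take t) π }

/-- Tree(ψ): ψ together with all seeds from which ψ is reachable by parent links. -/
def SeedTree (n : ℕ) (ψ : List ℕ) : Set (List ℕ) :=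
  { β | Relation.ReflTransGen (fun x y => IsParent n y x) β ψ }

/-- bunch(ψ) = (⋃_{β ∈ Tree(ψ)} perms(β) ∖ cycle(ψ̃)) ∪ {ψ̃, ψ^(n−1)}. -/
def bunch (n : ℕ) (ψ : List ℕ) : Set (List ℕ) :=
  ((⋃ β ∈ SeedTree n ψ, perms n β) \ cycle (tildeSeed n ψ)) ∪
    {tildeSeed n ψ, seedShift n ψ (n - 1)}

/-- rank(π): the number of initial letters of SEQ_n needed to reach π from
π₀ = τ((n, n−1, …, 1)). -/
noncomputable def rank (n : ℕ) (π : List ℕ) : ℕ :=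
  sInf { t | applyWord ((SEQ n).take t) (tau (descList n)) = π }

/-- SUM(k,j) = |τ · ∏_{i=1}^{j−1} σ^i W_{Δ(k,i)} γ_{n−2−i}| + j. -/
def SUMw (n k j : ℕ) : ℕ :=
  (true :: ((List.range (j - 1)).map (fun m =>
    List.replicate (m + 1) false ++ W n (min (k - 1) (n - 2 - (m + 1))) ++
      gam (n - 2 - (m + 1)))).flatten).length + j

/-- ord(ψ): the position of the entry mis(ψ)⊕1 in ψ, counted from the right end. -/
def ord (n : ℕ) (ψ : List ℕ) : ℕ := ψ.length - ψ.idxOf (osucc n (mis n ψ))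

/-- Length of the continuation of the maximal decreasing subsequence starting
with current value `cur`. -/
def chainLen (n : ℕ) : List ℕ → ℕ → ℕ
  | [], _ => 0
  | b :: rest, cur => if cur = osucc n b then chainLen n rest b + 1 else chainLen n rest cur

/-- level(ψ) = n − m − 3, where m+1 is the length of dec_seq(ψ). -/
def level (n : ℕ) (ψ : List ℕ) : ℕ := n - chainLen n (ψ.drop 2) (ψ.getD 1 0) - 3


lemma sig_iter (i : ℕ) (l : List ℕ) : sig^[i] l = l.rotate i := by
  induction i generalizing l with
  | zero => simp
  | succ i ih =>
    rw [Function.iterate_succ_apply, ih]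
    unfold sig
    rw [List.rotate_rotate, Nat.add_comm]

lemma insertIdx_split (x : ℕ) : ∀ (q : ℕ) (l : List ℕ), q ≤ l.length →
    l.insertIdx q x = l.take q ++ x :: l.drop q := by
  intro q
  induction q with
  | zero => intro l _; simp
  | succ q ih =>
    intro l hl
    cases l with
    | nil => simp at hl
    | cons a l => simp [List.insertIdx_succ_cons, ih l (by simpa using hl)]

lemma indexOf_mid (x : ℕ) (t1 t2 : List ℕ) (h : x ∉ t1) :
    (t1 ++ x :: t2).idxOf x = t1.length := by
  induction t1 with
  | nil => simp
  | cons a t1 ih =>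
    have hax : a ≠ x := by intro h'; exact h (by simp [h'])
    simp only [List.cons_append, List.length_cons]
    rw [List.idxOf_cons_ne _ hax, ih (fun hm => h (List.mem_cons_of_mem _ hm))]

lemma rotate_cons_eq (z : ℕ) (A B : List ℕ) (k : ℕ) (hN : (z :: A).Nodup)
    (h : (z :: A).rotate k = z :: B) : A = B := by
  have hm : k % (z::A).length < (z::A).length := Nat.mod_lt _ (by simp)
  have h' : (z :: A).rotate (k % (z::A).length) = z :: B := by rw [List.rotate_mod]; exact h
  have h0 := congrArg (fun l => l[0]?) h'
  rw [List.getElem?_rotate (by simp)] at h0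
  rw [Nat.zero_add, Nat.mod_mod_of_dvd _ dvd_rfl] at h0
  have h00 : k % (z::A).length = 0 :=
    (List.getElem?_inj hm hN).mp (by rw [h0]; simp)
  rw [h00, List.rotate_zero] at h'
  simpa using h'

lemma insert_rot (z h0 : ℕ) (t : List ℕ) (j : ℕ) (hj : j ≤ t.length + 1) :
    ∃ m, m ≤ t.length ∧ ((h0 :: t).insertIdx j z) ~r (h0 :: t.insertIdx m z) := by
  cases j with
  | zero =>
    refine ⟨t.length, le_rfl, ⟨1, ?_⟩⟩
    rw [List.insertIdx_zero, List.insertIdx_length_self]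
    simp [List.rotate_cons_succ]
  | succ m =>
    exact ⟨m, by omega, by rw [List.insertIdx_succ_cons]⟩

lemma osucc_bounds (n a : ℕ) (hn : 5 ≤ n) (h1 : 1 ≤ a) (h2 : a ≤ n - 1) :
    1 ≤ osucc n a ∧ osucc n a ≤ n - 1 := by
  simp only [osucc]; split_ifs <;> omega

lemma osucc_inj (n a b : ℕ) (hn : 5 ≤ n) (ha1 : 1 ≤ a) (ha2 : a ≤ n - 1)
    (hb1 : 1 ≤ b) (hb2 : b ≤ n - 1) (h : osucc n a = osucc n b) : a = b := by
  simp only [osucc] at h; split_ifs at h <;> omega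

lemma osucc_ne (n a : ℕ) (hn : 5 ≤ n) (h1 : 1 ≤ a) (h2 : a ≤ n - 1) : osucc n a ≠ a := by
  simp only [osucc]; split_ifs <;> omega

lemma osucc_osucc_ne (n a : ℕ) (hn : 5 ≤ n) (h1 : 1 ≤ a) (h2 : a ≤ n - 1) :
    osucc n (osucc n a) ≠ a := by
  simp only [osucc]; split_ifs <;> omega

lemma mem_bounds {n z : ℕ} {L : List ℕ} (hperm : L.Perm (List.range' 1 n)) :
    z ∈ L ↔ 1 ≤ z ∧ z ≤ n := by
  rw [hperm.mem_iff, List.mem_range']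
  constructor
  · rintro ⟨i, hi, rfl⟩; omega
  · rintro ⟨h1, h2⟩; exact ⟨z - 1, by omega, by omega⟩


lemma seed_dest (n : ℕ) (hn : 5 ≤ n) (ψ : List ℕ) (hs : IsSeed n ψ) :
    ∃ a t0, ψ = n :: a :: t0 ∧ t0.length = n - 3 ∧ mis n ψ = osucc n a ∧
      (n :: mis n ψ :: a :: t0).Perm (List.range' 1 n) := by
  obtain ⟨hlen, hhead, hperm⟩ := hs
  cases ψ with
  | nil => simp at hhead
  | cons a1 rest =>
    cases rest with
    | nil => simp at hlen; omega
    | cons a t0 =>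
      have ha1 : a1 = n := by simpa using hhead
      have hmis : mis n (a1 :: a :: t0) = osucc n a := by simp [mis]
      refine ⟨a, t0, by rw [ha1], by simp at hlen ⊢; omega, hmis, ?_⟩
      rw [hmis]
      rw [ha1] at hperm
      simpa [seedToPerm, IsPerm] using hperm

lemma parent_struct (n : ℕ) (hn : 5 ≤ n) (φ ψ : List ℕ) (hpar : IsParent n φ ψ) :
    ∃ t1 t2 : List ℕ,
      ψ = n :: (t1 ++ mis n φ :: t2) ∧
      φ = n :: mis n ψ :: (t1 ++ t2) ∧
      1 ≤ t1.length ∧ t1.length + t2.length = n - 3 ∧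
      (n :: mis n ψ :: (t1 ++ mis n φ :: t2)).Nodup ∧
      mis n φ ∉ t1 ∧ mis n φ ≠ n ∧ mis n φ ≠ mis n ψ := by
  obtain ⟨hφs, hψs, hne, ⟨π, hπφ, hπψ⟩, hh, hmeq⟩ := hpar
  obtain ⟨a, t0, hψE, hlt0, hymis, hPψ⟩ := seed_dest n hn ψ hψs
  obtain ⟨b, s0, hφE, hls0, hxmis, hPφ⟩ := seed_dest n hn φ hφs
  set x := mis n φ with hxdef
  set y := mis n ψ with hydef
  have Nψ : (n :: y :: a :: t0).Nodup := (hPψ.nodup_iff).mpr (List.nodup_range')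
  have Nφ : (n :: x :: b :: s0).Nodup := (hPφ.nodup_iff).mpr (List.nodup_range')
  have haB : 1 ≤ a ∧ a ≤ n := (mem_bounds hPψ).mp (by simp)
  have han : a ≠ n := by rintro rfl; exact (List.nodup_cons.mp Nψ).1 (by simp)
  have ha2 : a ≤ n - 1 := by omega
  have hyb : 1 ≤ y ∧ y ≤ n - 1 := hymis ▸ osucc_bounds n a hn haB.1 ha2
  have hxb : 1 ≤ x ∧ x ≤ n - 1 :=
    hmeq ▸ osucc_bounds n (y) hn hyb.1 hyb.2
  have hbB : 1 ≤ b ∧ b ≤ n := (mem_bounds hPφ).mp (by simp)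
  have hbn : b ≠ n := by rintro rfl; exact (List.nodup_cons.mp Nφ).1 (by simp)
  have hbeq : b = y :=
    osucc_inj n b (y) hn hbB.1 (by omega) hyb.1 hyb.2 (by rw [← hxmis, hmeq])
  subst hbeq
  have hxn : x ≠ n := by omega
  have hxy : x ≠ y := hmeq ▸ osucc_ne n (y) hn hyb.1 hyb.2
  have hya : y ≠ a := hymis ▸ osucc_ne n a hn haB.1 ha2
  have hxa : x ≠ a := by
    rw [hmeq, hymis]; exact osucc_osucc_ne n a hn haB.1 ha2
  have hxmem : x ∈ a :: t0 := by
    have hx2 : x ∈ n :: y :: a :: t0 := (mem_bounds hPψ).mpr ⟨hxb.1, by omega⟩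
    rcases List.mem_cons.mp hx2 with h | h
    · exact absurd h hxn
    · rcases List.mem_cons.mp h with h' | h'
      · exact absurd h' hxy
      · exact h'
  have hxs0 : x ∉ y :: s0 := (List.nodup_cons.mp (List.nodup_cons.mp Nφ).2).1
  obtain ⟨j', k', hj', hE'⟩ := hπφ
  obtain ⟨j, k, hj, hE⟩ := hπψ
  have h1pi : (ψ.insertIdx j (y)) ~r π := ⟨k, hE.symm⟩
  have h2pi : (φ.insertIdx j' (x)) ~r π := ⟨k', hE'.symm⟩
  have hR := h1pi.trans h2pi.symm
  rw [hψE, hφE] at hR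
  obtain ⟨m, hmle, hr1⟩ := insert_rot (y) n (a :: t0) j
    (by rw [hψE] at hj; simpa using hj)
  obtain ⟨m', hm'le, hr2⟩ := insert_rot (x) n (y :: s0) j'
    (by rw [hφE] at hj'; simpa using hj')
  have hRR := hr1.symm.trans (hR.trans hr2)
  have Nins : (n :: (a :: t0).insertIdx m (y)).Nodup := by
    have hp : (n :: (a :: t0).insertIdx m (y)).Perm (n :: y :: a :: t0) :=
      List.Perm.cons n (List.perm_insertIdx _ _ hmle)
    exact hp.nodup_iff.mpr Nψ
  obtain ⟨k0, hk0⟩ := hRR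
  have hEq : (a :: t0).insertIdx m (y) = (y :: s0).insertIdx m' (x) :=
    rotate_cons_eq n _ _ k0 Nins hk0
  cases m with
  | succ m1 =>
    cases m' with
    | zero =>
      rw [List.insertIdx_succ_cons, List.insertIdx_zero] at hEq
      injection hEq with h1 _
      exact absurd h1.symm hxa
    | succ q =>
      rw [List.insertIdx_succ_cons, List.insertIdx_succ_cons] at hEq
      injection hEq with h1 _
      exact absurd h1.symm hya
  | zero =>
    cases m' with
    | zero =>
      rw [List.insertIdx_zero, List.insertIdx_zero] at hEq
      injection hEq with h1 _
      exact absurd h1.symm hxy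
    | succ q =>
      rw [List.insertIdx_zero, List.insertIdx_succ_cons] at hEq
      injection hEq with _ hT
      have hqle : q ≤ s0.length := by simpa using hm'le
      rw [insertIdx_split _ q s0 hqle] at hT
      refine ⟨s0.take q, s0.drop q, ?_, ?_, ?_, ?_, ?_, ?_, hxn, hxy⟩
      · rw [hψE, hT]
      · rw [hφE, List.take_append_drop]
      · rcases hq0 : s0.take q with _ | ⟨c, l⟩
        · rw [hq0] at hT
          simp only [List.nil_append] at hT
          injection hT with h1 _
          exact absurd h1.symm hxa
        · simp
      · rw [← List.length_append, List.take_append_drop]; omega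
      · rw [← hT]; exact Nψ
      · intro hmem
        exact hxs0 (List.mem_cons_of_mem _ (List.mem_of_mem_take hmem))


/-- for a seed ψ with parent φ and 1 ≤ i ≤ n−3,
ψ = son(φ, i) iff ord(ψ) = i. -/
theorem son_iff_ord (n : ℕ) (hn : 5 ≤ n) (φ ψ : List ℕ) (hpar : IsParent n φ ψ)
    (i : ℕ) (h1 : 1 ≤ i) (h2 : i ≤ n - 3) :
    IsSon n ψ φ i ↔ ord n ψ = i := by
  have hψs : IsSeed n ψ := hpar.2.1
  have hφs : IsSeed n φ := hpar.1
  have hmeq : mis n φ = osucc n (mis n ψ) := hpar.2.2.2.2.2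
  obtain ⟨t1, t2, hψE, hφE, ht1, htot, Nod, hxt1, hxn, hxy⟩ := parent_struct n hn φ ψ hpar
  have hφlen : φ.length = n - 1 := hφs.1
  have htS : tildeSeed n ψ = n :: mis n ψ :: (t1 ++ mis n φ :: t2) := by
    rw [hψE]
    simp only [tildeSeed]
  have hlenT : (n :: mis n ψ :: (t1 ++ mis n φ :: t2)).length = n := by
    simp; omega
  have hordv : ord n ψ = n - 2 - t1.length := by
    unfold ord
    rw [← hmeq, hψE]
    have hnm : mis n φ ∉ n :: t1 := by
      intro h
      rcases List.mem_cons.mp h with h | h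
      · exact hxn h
      · exact hxt1 h
    have h1' : (n :: (t1 ++ mis n φ :: t2)).idxOf (mis n φ) = t1.length + 1 := by
      rw [← List.cons_append, indexOf_mid _ _ _ hnm]
      simp
    rw [h1']
    simp only [List.length_cons, List.length_append]
    omega
  constructor
  · rintro ⟨_, heq⟩
    rw [sig_iter] at heq
    simp only [seedShift] at heq
    have hlenL : (mis n φ :: φ.rotate (n - i)).length = n := by
      simp [List.length_rotate, hφlen]; omega
    have hLv : ((mis n φ :: φ.rotate (n - i)).rotate i)[n - i]? = some (mis n φ) := by
      rw [List.getElem?_rotate (by rw [hlenL]; omega)]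
      have hz : (n - i + i) % (mis n φ :: φ.rotate (n - i)).length = 0 := by
        rw [hlenL, Nat.sub_add_cancel (by omega), Nat.mod_self]
      rw [hz]
      simp
    rw [heq, htS] at hLv
    have hRv : (n :: mis n ψ :: (t1 ++ mis n φ :: t2))[t1.length + 2]? = some (mis n φ) := by
      rw [show t1.length + 2 = (t1.length + 1) + 1 from rfl]
      rw [List.getElem?_cons_succ, List.getElem?_cons_succ]
      rw [List.getElem?_append_right (le_refl t1.length)]
      simp
    have hEq := (List.getElem?_inj (by rw [hlenT]; omega) Nod).mp (hLv.trans hRv.symm)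
    rw [hordv]
    omega
  · intro hio
    refine ⟨hψs, ?_⟩
    rw [sig_iter]
    simp only [seedShift]
    have hp : t1.length = n - 2 - i := by rw [hordv] at hio; omega
    have h2' : t2.length = i - 1 := by omega
    have hrotφ : φ.rotate (n - i) = t2 ++ (n :: mis n ψ :: t1) := by
      rw [hφE]
      have hlen' : (n :: mis n ψ :: (t1 ++ t2)).length = n - 1 := by simp; omega
      rw [List.rotate_eq_drop_append_take (by rw [hlen']; omega)]
      have hni : n - i = t1.length + 2 := by omega
      rw [hni, show t1.length + 2 = (t1.length + 1) + 1 from rfl]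
      rw [List.drop_succ_cons, List.drop_succ_cons, List.drop_left]
      rw [List.take_succ_cons, List.take_succ_cons, List.take_left]
    rw [hrotφ, htS]
    rw [show (mis n φ :: (t2 ++ n :: mis n ψ :: t1))
        = (mis n φ :: t2) ++ (n :: mis n ψ :: t1) from rfl]
    have hL2 : (mis n φ :: t2).length = i := by simp [h2']; omega
    rw [List.rotate_eq_drop_append_take (by simp; omega)]
    rw [← hL2, List.drop_left, List.take_left]
    rfl
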